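/- Let h₁, k₁, h₂, k₂ ∈ ℝ with h₂ ≠ k₁, let M be the 2×2 real matrix with rows (h₁, k₁) and (h₂, k₂), and for φ ∈ L²([0,1]; ℝ²) define B(φ) = ∫_0^1 φ(t) · (M ∫_0^t φ(s) ds) dt. Consider the orthonormal basis {ξ} of L²([0,1]; ℝ²) given by the constant functions (1,0), (0,1) together with, for each integer n ≥ 1, the four functions (cos(2πnt), sin(2πnt)), (sin(2πnt), cos(2πnt)), (−cos(2πnt), sin(2πnt)), (−sin(2πnt), cos(2πnt)) (each normalized in L²). Then the family (B(ξ))_{ξ in this basis} is not absolutely summable: the series Σ_ξ |B(ξ)| diverges. Hence the series Σ_ξ B(ξ) does not converge unconditionally and its value depends on the order of the terms. -/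

import Mathlib

open MeasureTheory Real Matrix intervalIntegral




lemma inner_int (ω : ℝ) (hω : ω ≠ 0) (t : ℝ) :
    (∫ s in (0:ℝ)..t, (![Real.cos (ω*s), Real.sin (ω*s)] : Fin 2 → ℝ)) =
      ![Real.sin (ω*t)/ω, (1 - Real.cos (ω*t))/ω] := by
  have key : ∀ s : ℝ, HasDerivAt (fun u => (![Real.sin (ω*u)/ω, (1 - Real.cos (ω*u))/ω] : Fin 2 → ℝ))
      (![Real.cos (ω*s), Real.sin (ω*s)]) s := by
    intro s
    rw [hasDerivAt_pi]
    intro i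
    have hid : HasDerivAt (fun u : ℝ => ω * u) ω s := by
      simpa using (hasDerivAt_id s).const_mul ω
    have hs : HasDerivAt (fun u => Real.sin (ω*u)) (ω * Real.cos (ω*s)) s := by
      simpa [mul_comm, Function.comp_def] using (Real.hasDerivAt_sin (ω*s)).comp s hid
    have hc : HasDerivAt (fun u => Real.cos (ω*u)) (-(ω * Real.sin (ω*s))) s := by
      simpa [mul_comm, Function.comp_def] using (Real.hasDerivAt_cos (ω*s)).comp s hid
    fin_cases i
    · simpa [Matrix.cons_val_zero] using (hs.div_const ω).congr_deriv (by field_simp)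
    · simpa [Matrix.cons_val_one, Matrix.head_cons] using
        (((hasDerivAt_const s (1:ℝ)).sub hc).div_const ω).congr_deriv (by field_simp; ring)
  have := intervalIntegral.integral_eq_sub_of_hasDerivAt (a := (0:ℝ)) (b := t)
    (f := fun u => (![Real.sin (ω*u)/ω, (1 - Real.cos (ω*u))/ω] : Fin 2 → ℝ))
    (fun s _ => key s) (by
      apply Continuous.intervalIntegrable
      exact continuous_pi fun i => by fin_cases i <;> simp <;> fun_prop)
  rw [this]
  funext i
  fin_cases i <;> simp

lemma Bval (h₁ k₁ h₂ k₂ ω : ℝ) (hω : ω ≠ 0) (hs1 : Real.sin ω = 0) (hc1 : Real.cos ω = 1) :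
    (∫ t in (0:ℝ)..1, (![Real.cos (ω*t), Real.sin (ω*t)] : Fin 2 → ℝ) ⬝ᵥ
      (!![h₁, k₁; h₂, k₂]).mulVec (∫ s in (0:ℝ)..t, ![Real.cos (ω*s), Real.sin (ω*s)]))
      = (h₂ - k₁)/(2*ω) := by
  set F : ℝ → ℝ := fun t => h₁/ω * ((Real.sin (ω*t))^2/(2*ω))
     + k₁/ω * (Real.sin (ω*t)/ω - t/2 - Real.sin (ω*t)*Real.cos (ω*t)/(2*ω))
     + h₂/ω * (t/2 - Real.sin (ω*t)*Real.cos (ω*t)/(2*ω))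
     + k₂/ω * (-Real.cos (ω*t)/ω - (Real.sin (ω*t))^2/(2*ω)) with hF
  set D : ℝ → ℝ := fun t => Real.cos (ω*t)*(h₁*(Real.sin (ω*t)/ω)+k₁*((1-Real.cos (ω*t))/ω))
     + Real.sin (ω*t)*(h₂*(Real.sin (ω*t)/ω)+k₂*((1-Real.cos (ω*t))/ω)) with hD
  have hderiv : ∀ t : ℝ, HasDerivAt F (D t) t := by
    intro t
    have hid : HasDerivAt (fun u : ℝ => ω * u) ω t := by
      simpa using (hasDerivAt_id t).const_mul ω
    have hs : HasDerivAt (fun u => Real.sin (ω*u)) (ω * Real.cos (ω*t)) t := by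
      simpa [mul_comm, Function.comp_def] using (Real.hasDerivAt_sin (ω*t)).comp t hid
    have hc : HasDerivAt (fun u => Real.cos (ω*u)) (-(ω * Real.sin (ω*t))) t := by
      simpa [mul_comm, Function.comp_def] using (Real.hasDerivAt_cos (ω*t)).comp t hid
    have h1 := ((hs.pow 2).div_const (2*ω)).const_mul (h₁/ω)
    have h2 := ((((hs.div_const ω).sub ((hasDerivAt_id t).div_const 2)).sub
      ((hs.mul hc).div_const (2*ω))).const_mul (k₁/ω))
    have h3 := ((((hasDerivAt_id t).div_const 2).sub
      ((hs.mul hc).div_const (2*ω))).const_mul (h₂/ω))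
    have h4 := ((((hc.div_const ω).neg).sub ((hs.pow 2).div_const (2*ω))).const_mul (k₂/ω))
    have H := ((h1.add h2).add h3).add h4
    have pyth : Real.sin (ω*t)^2 + Real.cos (ω*t)^2 = 1 := Real.sin_sq_add_cos_sq _
    convert H using 1
    case e'_4 => exact rfl
    case e'_5 => exact rfl
    · rw [hF]; funext x; simp only [id_eq, Pi.add_apply, Pi.sub_apply, Pi.neg_apply, Pi.mul_apply, Pi.pow_apply]; ring
    · rw [hD]
      have hinv : ω * ω⁻¹ = 1 := mul_inv_cancel₀ hω
      push_cast
      linear_combination ((h₂ - k₁)/(2*ω)) * pyth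
        - ω⁻¹ * (Real.cos (ω*t)*Real.sin (ω*t)*h₁ - Real.cos (ω*t)*Real.sin (ω*t)*k₂
          + Real.cos (ω*t)*k₁ + Real.sin (ω*t)*k₂
          - (Real.cos (ω*t)^2 - Real.sin (ω*t)^2)*(k₁+h₂)/2) * hinv
  have hcont : IntervalIntegrable D volume 0 1 := by
    apply Continuous.intervalIntegrable
    rw [hD]; fun_prop
  calc (∫ t in (0:ℝ)..1, (![Real.cos (ω*t), Real.sin (ω*t)] : Fin 2 → ℝ) ⬝ᵥ
      (!![h₁, k₁; h₂, k₂]).mulVec (∫ s in (0:ℝ)..t, ![Real.cos (ω*s), Real.sin (ω*s)]))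
      = ∫ t in (0:ℝ)..1, D t := by
        apply intervalIntegral.integral_congr
        intro t _
        simp only [inner_int ω hω, hD]
        simp [Matrix.mulVec, dotProduct, Fin.sum_univ_two]
        try ring
    _ = F 1 - F 0 := intervalIntegral.integral_eq_sub_of_hasDerivAt (fun t _ => hderiv t) hcont
    _ = (h₂ - k₁)/(2*ω) := by
        rw [hF]
        simp [hs1, hc1]
        field_simp
        ring



/-- With `M = !![h₁, k₁; h₂, k₂]`, `h₂ ≠ k₁`, and
`B(φ) = ∫_0^1 φ(t) · (M ∫_0^t φ(s) ds) dt`, consider the orthonormal basis `{ξ}` of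
`L²([0,1]; ℝ²)` given by the constants `(1,0)`, `(0,1)` together with, for each `n ≥ 1`,
`(cos 2πnt, sin 2πnt)`, `(sin 2πnt, cos 2πnt)`, `(−cos 2πnt, sin 2πnt)`,
`(−sin 2πnt, cos 2πnt)`. Then the family `(B(ξ))` is not absolutely summable, hence the series
`Σ_ξ B(ξ)` does not converge unconditionally (its value depends on the order of the terms). -/
theorem statement10 (h₁ k₁ h₂ k₂ : ℝ) (hcurl : h₂ ≠ k₁)
    (M : Matrix (Fin 2) (Fin 2) ℝ) (hM : M = !![h₁, k₁; h₂, k₂])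
    (B : (ℝ → Fin 2 → ℝ) → ℝ)
    (hB : ∀ φ : ℝ → Fin 2 → ℝ,
      B φ = ∫ t in (0:ℝ)..1, φ t ⬝ᵥ M.mulVec (∫ s in (0:ℝ)..t, φ s))
    (ξ : (Fin 2 ⊕ ℕ × Fin 4) → ℝ → Fin 2 → ℝ)
    (hξ0 : ξ (Sum.inl 0) = fun _ => ![1, 0])
    (hξ1 : ξ (Sum.inl 1) = fun _ => ![0, 1])
    (hξa : ∀ n : ℕ, ξ (Sum.inr (n, 0)) = fun t =>
      ![Real.cos (2 * π * ((n : ℝ) + 1) * t), Real.sin (2 * π * ((n : ℝ) + 1) * t)])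
    (hξb : ∀ n : ℕ, ξ (Sum.inr (n, 1)) = fun t =>
      ![Real.sin (2 * π * ((n : ℝ) + 1) * t), Real.cos (2 * π * ((n : ℝ) + 1) * t)])
    (hξc : ∀ n : ℕ, ξ (Sum.inr (n, 2)) = fun t =>
      ![-Real.cos (2 * π * ((n : ℝ) + 1) * t), Real.sin (2 * π * ((n : ℝ) + 1) * t)])
    (hξd : ∀ n : ℕ, ξ (Sum.inr (n, 3)) = fun t =>
      ![-Real.sin (2 * π * ((n : ℝ) + 1) * t), Real.cos (2 * π * ((n : ℝ) + 1) * t)]) :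
    ¬ Summable (fun i => |B (ξ i)|) ∧ ¬ Summable (fun i => B (ξ i)) := by
  have hπ : (0:ℝ) < π := Real.pi_pos
  have hBn : ∀ n : ℕ, B (ξ (Sum.inr (n, 0))) = (h₂ - k₁)/(2*(2*π*((n:ℝ)+1))) := by
    intro n
    set ω : ℝ := 2*π*((n:ℝ)+1) with hωdef
    have hωpos : 0 < ω := by positivity
    have hω : ω ≠ 0 := ne_of_gt hωpos
    have hs1 : Real.sin ω = 0 := by
      have : ω = ((2*(n+1) : ℕ) : ℝ) * π := by push_cast; ring
      rw [this, Real.sin_nat_mul_pi]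
    have hc1 : Real.cos ω = 1 := by
      have : ω = ((n+1 : ℕ) : ℝ) * (2*π) := by push_cast; ring
      rw [this, Real.cos_nat_mul_two_pi]
    rw [hB, hξa n, hM]
    exact Bval h₁ k₁ h₂ k₂ ω hω hs1 hc1
  have hcne : |h₂ - k₁| ≠ 0 := by
    simp only [ne_eq, abs_eq_zero, sub_eq_zero]
    exact hcurl
  have hcpos : 0 < |h₂ - k₁| := lt_of_le_of_ne (abs_nonneg _) (Ne.symm hcne)
  have habs : ¬ Summable (fun i => |B (ξ i)|) := by
    intro h
    have hinj : Function.Injective (fun n : ℕ => (Sum.inr (n, (0:Fin 4)) : Fin 2 ⊕ ℕ × Fin 4)) := by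
      intro a b hab
      simpa using hab
    have h2 : Summable (fun n : ℕ => |B (ξ (Sum.inr (n, 0)))|) := h.comp_injective hinj
    have h3 : Summable (fun n : ℕ => 1/(((n+1:ℕ)):ℝ)) := by
      have h4 := h2.mul_left (4*π/|h₂ - k₁|)
      apply h4.congr
      intro n
      rw [hBn n]
      have hd : (0:ℝ) < 2*(2*π*((n:ℝ)+1)) := by positivity
      rw [abs_div, abs_of_pos hd]
      push_cast
      field_simp
      ring
    have h5 : Summable (fun n : ℕ => 1/(n:ℝ)) :=
      (summable_nat_add_iff (f := fun n : ℕ => 1/(n:ℝ)) 1).mp h3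
    exact Real.not_summable_one_div_natCast h5
  refine ⟨habs, fun h => habs (summable_abs_iff.mpr h)⟩
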